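/- arXiv:1001.4684 — 3 statements merged into one kernel-verified Lean document; each statement's English description precedes it below -/
import Mathlib

section
/- Let β > 0 and H be a distribution function on (0,∞) with H(0)=0 and upper endpoint ω. Then for all x ∈ (0,ω): (1/Γ(β+1)) ∫_x^∞ (y−x)^β y^{−β} dH(y) = (x/Γ(β)) ∫_x^∞ (y−x)^{β−1} y^{−1−β} (1−H(y)) dy. -/
open MeasureTheory ProbabilityTheory Real Filter Topology Set
open scoped ENNReal

open Function in
private lemma aux_ii {β x y : ℝ} (hβ : 0 < β) (hx : 0 < x) (hy : x < y) :
    IntervalIntegrable (fun t : ℝ => β * x * (t - x) ^ (β - 1) * t ^ (-1 - β)) volume x y := by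
  have i1 : IntervalIntegrable (fun t : ℝ => (t - x) ^ (β - 1)) volume x y := by
    have := (intervalIntegral.intervalIntegrable_rpow' (a := 0) (b := y - x)
      (by linarith : (-1:ℝ) < β - 1)).comp_sub_right x
    simpa using this
  have i2 := i1.mul_continuousOn (g := fun t : ℝ => t ^ (-1 - β)) ?_
  · have := i2.const_mul (β * x)
    simpa [mul_assoc] using this
  · intro t ht
    rw [uIcc_of_le hy.le] at ht
    exact ((Real.continuousAt_rpow_const _ _ (Or.inl (hx.trans_le ht.1).ne'))).continuousWithinAt

private lemma aux_ftc {β x y : ℝ} (hβ : 0 < β) (hx : 0 < x) (hy : x < y) :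
    ∫ t in Set.Ioc x y, β * x * (t - x) ^ (β - 1) * t ^ (-1 - β)
      = (y - x) ^ β * y ^ (-β) := by
  have hc1 : Continuous fun t : ℝ => (t - x) ^ β := by
    rw [continuous_iff_continuousAt]
    intro t
    exact (Real.continuousAt_rpow_const _ _ (Or.inr hβ.le)).comp
      ((continuous_id.sub continuous_const).continuousAt)
  have hcont : ContinuousOn (fun t : ℝ => (t - x) ^ β * t ^ (-β)) (Icc x y) := by
    refine hc1.continuousOn.mul ?_
    intro t ht
    exact ((Real.continuousAt_rpow_const _ _ (Or.inl (hx.trans_le ht.1).ne'))).continuousWithinAt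
  have hderiv : ∀ t ∈ Ioo x y, HasDerivWithinAt (fun t : ℝ => (t - x) ^ β * t ^ (-β))
      (β * x * (t - x) ^ (β - 1) * t ^ (-1 - β)) (Ioi t) t := by
    intro t ht
    have ht0 : (0:ℝ) < t := hx.trans ht.1
    have ha : (0:ℝ) < t - x := sub_pos.2 ht.1
    have h1 : HasDerivAt (fun t : ℝ => (t - x) ^ β) (β * (t - x) ^ (β - 1)) t := by
      have := ((hasDerivAt_id t).sub_const x).rpow_const (p := β) (Or.inl ha.ne')
      simpa using this
    have h2 : HasDerivAt (fun t : ℝ => t ^ (-β)) (-β * t ^ (-β - 1)) t := by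
      simpa using Real.hasDerivAt_rpow_const (x := t) (p := -β) (Or.inl ht0.ne')
    have h := h1.mul h2
    have e1 : (t:ℝ) ^ (-β) = t ^ (-β - 1) * t := by
      rw [← Real.rpow_add_one ht0.ne' (-β - 1)]; norm_num
    have e2 : (t - x) ^ β = (t - x) ^ (β - 1) * (t - x) := by
      rw [← Real.rpow_add_one ha.ne' (β - 1)]; norm_num
    have e3 : (t:ℝ) ^ (-1 - β) = t ^ (-β - 1) := by congr 1; ring
    have hval : β * x * (t - x) ^ (β - 1) * t ^ (-1 - β)
        = β * (t - x) ^ (β - 1) * t ^ (-β) + (t - x) ^ β * (-β * t ^ (-β - 1)) := by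
      rw [e1, e2, e3]; ring
    rw [hval]; exact h.hasDerivWithinAt
  have hint := aux_ii hβ hx hy
  have := intervalIntegral.integral_eq_sub_of_hasDeriv_right_of_le hy.le hcont hderiv hint
  rw [intervalIntegral.integral_of_le hy.le] at this
  rw [this, sub_self x, Real.zero_rpow hβ.ne', zero_mul, sub_zero]

open Function in
private lemma aux_fubini {β x : ℝ} (hβ : 0 < β) (hx : 0 < x)
    (μ : Measure ℝ) [IsProbabilityMeasure μ] :
    ∫⁻ y in Ioi x, ENNReal.ofReal ((y - x) ^ β * y ^ (-β)) ∂μ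
      = ∫⁻ t in Ioi x, ENNReal.ofReal (β * x * (t - x) ^ (β - 1) * t ^ (-1 - β)) * μ (Ioi t) := by
  set k : ℝ → ℝ≥0∞ := fun t => ENNReal.ofReal (β * x * (t - x) ^ (β - 1) * t ^ (-1 - β)) with hk_def
  have hk : Measurable k := by unfold k; fun_prop
  set F : ℝ → ℝ → ℝ≥0∞ := fun y t => ({p : ℝ × ℝ | p.2 < p.1}.indicator (fun p => k p.2)) (y, t)
    with hF_def
  have hF : AEMeasurable (uncurry F) ((μ.restrict (Ioi x)).prod (volume.restrict (Ioi x))) := by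
    have : uncurry F = {p : ℝ × ℝ | p.2 < p.1}.indicator (fun p => k p.2) := rfl
    rw [this]
    exact (((hk.comp measurable_snd).indicator
      (measurableSet_lt measurable_snd measurable_fst))).aemeasurable
  calc ∫⁻ y in Ioi x, ENNReal.ofReal ((y - x) ^ β * y ^ (-β)) ∂μ
      = ∫⁻ y in Ioi x, (∫⁻ t in Ioi x, F y t) ∂μ := by
        refine setLIntegral_congr_fun measurableSet_Ioi (fun y hy => ?_)
        have hxy : x < y := hy
        have hnn : 0 ≤ᵐ[volume.restrict (Ioc x y)]
            fun t : ℝ => β * x * (t - x) ^ (β - 1) * t ^ (-1 - β) := by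
          refine (ae_restrict_iff' measurableSet_Ioc).2 (ae_of_all _ fun t ht => ?_)
          have h1 : (0:ℝ) ≤ (t - x) ^ (β - 1) := Real.rpow_nonneg (by linarith [ht.1]) _
          have h2 : (0:ℝ) ≤ t ^ (-1 - β) := Real.rpow_nonneg (by linarith [ht.1]) _
          positivity
        have h1 : ENNReal.ofReal ((y - x) ^ β * y ^ (-β)) = ∫⁻ t in Ioc x y, k t := by
          rw [← aux_ftc hβ hx hxy]
          exact ofReal_integral_eq_lintegral_ofReal
            ((intervalIntegrable_iff_integrableOn_Ioc_of_le hxy.le).1 (aux_ii hβ hx hxy)) hnn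
        have h2 : ∫⁻ t in Ioi x, F y t = ∫⁻ t in Ioo x y, k t := by
          have he : (fun t => F y t) = (Iio y).indicator k := by
            funext t
            by_cases h : t < y <;>
              simp [hF_def, Set.indicator, h, Set.mem_setOf_eq, Set.mem_Iio]
          rw [he, lintegral_indicator measurableSet_Iio,
            Measure.restrict_restrict measurableSet_Iio, Set.Iio_inter_Ioi]
        rw [h1, h2, setLIntegral_congr (Ioo_ae_eq_Ioc (a := x) (b := y))]
    _ = ∫⁻ t in Ioi x, (∫⁻ y in Ioi x, F y t ∂μ) := lintegral_lintegral_swap hF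
    _ = ∫⁻ t in Ioi x, k t * μ (Ioi t) := by
        refine setLIntegral_congr_fun measurableSet_Ioi (fun t ht => ?_)
        have he : (fun y => F y t) = (Ioi t).indicator (fun _ => k t) := by
          funext y
          by_cases h : t < y <;>
            simp [hF_def, Set.indicator, h, Set.mem_setOf_eq, Set.mem_Ioi]
        rw [he, lintegral_indicator measurableSet_Ioi,
          Measure.restrict_restrict measurableSet_Ioi,
          Set.inter_eq_left.2 (Set.Ioi_subset_Ioi (le_of_lt ht)), setLIntegral_const]

theorem weyl_stieltjes_survival_identity
    (β : ℝ) (hβ : 0 < β)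
    -- `μ` is the law of a positive random variable with df `H`
    (μ : Measure ℝ) [IsProbabilityMeasure μ] (hμ0 : μ (Set.Iic 0) = 0)
    (H : ℝ → ℝ) (hH : ∀ x, H x = (μ (Set.Iic x)).toReal)
    -- `ϖ` is the upper endpoint of `H`
    (ϖ : ℝ≥0∞) (hϖ : ∀ x : ℝ, ENNReal.ofReal x < ϖ ↔ H x < 1) :
    ∀ x : ℝ, 0 < x → ENNReal.ofReal x < ϖ →
      (1 / Real.Gamma (β + 1)) * ∫ y in Set.Ioi x, (y - x) ^ β * y ^ (-β) ∂μ
        = (x / Real.Gamma β) *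
            ∫ y in Set.Ioi x, (y - x) ^ (β - 1) * y ^ (-1 - β) * (1 - H y) := by
  intro x hx _
  have hΓβ : 0 < Real.Gamma β := Real.Gamma_pos_of_pos hβ
  have hHmono : Monotone H := fun a b hab => by
    rw [hH, hH]
    exact ENNReal.toReal_mono (measure_ne_top μ _) (measure_mono (Iic_subset_Iic.2 hab))
  have hHle : ∀ t, H t ≤ 1 := fun t => by
    rw [hH]
    have h1 := prob_le_one (μ := μ) (s := Set.Iic t)
    have := ENNReal.toReal_mono (by norm_num) h1
    simpa using this
  set T : ℝ≥0∞ := ∫⁻ y in Ioi x, ENNReal.ofReal ((y - x) ^ β * y ^ (-β)) ∂μ with hT_def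
  set L : ℝ≥0∞ :=
    ∫⁻ t in Ioi x, ENNReal.ofReal ((t - x) ^ (β - 1) * t ^ (-1 - β) * (1 - H t)) with hL_def
  -- survival identity
  have hsurv : ∀ t : ℝ, x < t → μ (Ioi t) = ENNReal.ofReal (1 - H t) := by
    intro t _
    have hc : μ (Ioi t) = 1 - μ (Iic t) := by
      rw [← Set.compl_Iic, measure_compl measurableSet_Iic (measure_ne_top μ _)]
      simp
    rw [hc, ENNReal.ofReal_sub _ (by rw [hH]; positivity), hH,
      ENNReal.ofReal_toReal (measure_ne_top μ _), ENNReal.ofReal_one]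
  -- T = ofReal (β * x) * L
  have hTL : T = ENNReal.ofReal (β * x) * L := by
    rw [hT_def, aux_fubini hβ hx μ, hL_def, ← lintegral_const_mul' _ _ ENNReal.ofReal_ne_top]
    refine setLIntegral_congr_fun measurableSet_Ioi (fun t ht => ?_)
    have ht0 : (0:ℝ) < t := hx.trans ht
    have h1 : (0:ℝ) ≤ (t - x) ^ (β - 1) := Real.rpow_nonneg (by linarith [ht.out]) _
    have h2 : (0:ℝ) ≤ t ^ (-1 - β) := Real.rpow_nonneg ht0.le _
    have h3 : (0:ℝ) ≤ 1 - H t := by linarith [hHle t]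
    rw [hsurv t ht, ← ENNReal.ofReal_mul (by positivity), ← ENNReal.ofReal_mul (by positivity)]
    ring_nf
  -- T is finite
  have hT_ne_top : T ≠ ⊤ := by
    have hle : T ≤ 1 := by
      have h1 : T ≤ ∫⁻ _ in Ioi x, 1 ∂μ := by
        refine lintegral_mono_ae ((ae_restrict_iff' measurableSet_Ioi).2
          (ae_of_all _ fun y hy => ?_))
        have hy0 : (0:ℝ) < y := hx.trans hy
        have hb : (y - x) ^ β * y ^ (-β) ≤ 1 := by
          have hb1 : (y - x) ^ β ≤ y ^ β :=
            Real.rpow_le_rpow (by linarith [hy.out]) (by linarith) hβ.le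
          have hb2 : (0:ℝ) ≤ y ^ (-β) := Real.rpow_nonneg hy0.le _
          calc (y - x) ^ β * y ^ (-β) ≤ y ^ β * y ^ (-β) :=
                mul_le_mul_of_nonneg_right hb1 hb2
            _ = 1 := by rw [← Real.rpow_add hy0]; simp
        simpa using ENNReal.ofReal_le_one.2 hb
      calc T ≤ ∫⁻ _ in Ioi x, 1 ∂μ := h1
        _ = μ (Ioi x) := by simp
        _ ≤ 1 := prob_le_one
    exact ne_top_of_le_ne_top ENNReal.one_ne_top hle
  have hβx : ENNReal.ofReal (β * x) ≠ 0 := by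
    simp only [ne_eq, ENNReal.ofReal_eq_zero, not_le]
    positivity
  have hL_ne_top : L ≠ ⊤ := by
    intro hcon
    rw [hcon, ENNReal.mul_top hβx] at hTL
    exact hT_ne_top hTL
  -- Bochner integrals as lintegrals
  have hLHS : ∫ y in Set.Ioi x, (y - x) ^ β * y ^ (-β) ∂μ = T.toReal := by
    rw [hT_def, integral_eq_lintegral_of_nonneg_ae]
    · refine (ae_restrict_iff' measurableSet_Ioi).2 (ae_of_all _ fun y hy => ?_)
      have : (0:ℝ) < y := hx.trans hy
      have h1 : (0:ℝ) ≤ (y - x) ^ β := Real.rpow_nonneg (by linarith [hy.out]) _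
      have h2 : (0:ℝ) ≤ y ^ (-β) := Real.rpow_nonneg this.le _
      positivity
    · have : Measurable fun y : ℝ => (y - x) ^ β * y ^ (-β) := by fun_prop
      exact this.aestronglyMeasurable
  have hRHS : ∫ y in Set.Ioi x, (y - x) ^ (β - 1) * y ^ (-1 - β) * (1 - H y) = L.toReal := by
    rw [hL_def, integral_eq_lintegral_of_nonneg_ae]
    · refine (ae_restrict_iff' measurableSet_Ioi).2 (ae_of_all _ fun y hy => ?_)
      have hy0 : (0:ℝ) < y := hx.trans hy
      have h1 : (0:ℝ) ≤ (y - x) ^ (β - 1) := Real.rpow_nonneg (by linarith [hy.out]) _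
      have h2 : (0:ℝ) ≤ y ^ (-1 - β) := Real.rpow_nonneg hy0.le _
      have h3 : (0:ℝ) ≤ 1 - H y := by linarith [hHle y]
      positivity
    · have hm1 : Measurable fun y : ℝ => (y - x) ^ (β - 1) * y ^ (-1 - β) := by fun_prop
      exact (hm1.mul (measurable_const.sub hHmono.measurable)).aestronglyMeasurable
  rw [hLHS, hRHS, hTL, ENNReal.toReal_mul, ENNReal.toReal_ofReal (by positivity)]
  rw [Real.Gamma_add_one hβ.ne']
  field_simp
end

section
/- Let R ~ H with H(0)=0, independent of S uniform on (0,1), and set H_{1,1} the df of W = RS with density h_{1,1}. If lim_{x↓0} x·h_{1,1}(x)/H_{1,1}(x) = γ ∈ [0,1), then H_{1,1} is regularly varying at 0 with index γ and lim_{x↓0} H(x)/H_{1,1}(x) = 1 − γ; consequently H is also regularly varying at 0 with index γ. -/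
open MeasureTheory ProbabilityTheory Real Filter Topology Set
open scoped ENNReal

/-- A function `F` is regularly varying at `0` with index `γ`. -/
def RegVarAt0 (F : ℝ → ℝ) (γ : ℝ) : Prop :=
  ∀ t : ℝ, 0 < t →
    Filter.Tendsto (fun x => F (t * x) / F x) (nhdsWithin 0 (Set.Ioi 0)) (nhds (t ^ γ))

section auxiliary

lemma growth_upper {F f : ℝ → ℝ} {c a b : ℝ} (ha : 0 < a) (hab : a ≤ b)
    (Fcont : ContinuousOn F (Icc a b))
    (Fderiv : ∀ x ∈ Ico a b, HasDerivWithinAt F (f x) (Ici x) x)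
    (hup : ∀ s ∈ Icc a b, s * f s < c * F s) :
    F b ≤ F a * (b / a) ^ c := by
  have key : ∀ ⦃x⦄, x ∈ Icc a b → F x ≤ F a * (x / a) ^ c := by
    refine image_le_of_deriv_right_lt_deriv_boundary' (f' := f)
      (B := fun x => F a * (x / a) ^ c)
      (B' := fun x => c * (F a * (x / a) ^ c) / x) Fcont Fderiv ?_ ?_ ?_ ?_
    · simp [div_self ha.ne', Real.one_rpow]
    · refine continuousOn_const.mul (ContinuousOn.rpow_const (continuousOn_id.div_const a) ?_)
      intro x hx; left
      have := lt_of_lt_of_le ha hx.1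
      positivity
    · intro x hx
      have hx0 : 0 < x := lt_of_lt_of_le ha hx.1
      have h1 : HasDerivAt (fun x : ℝ => F a * (x / a) ^ c)
          (F a * (c * (x / a) ^ (c - 1) * (1 / a))) x := by
        have := (Real.hasDerivAt_rpow_const (x := x / a) (p := c)
          (Or.inl (by positivity))).comp x ((hasDerivAt_id x).div_const a)
        simpa using this.const_mul (F a)
      have heq : F a * (c * (x / a) ^ (c - 1) * (1 / a))
          = c * (F a * (x / a) ^ c) / x := by
        rw [Real.rpow_sub_one (by positivity)]
        field_simp
      exact (heq ▸ h1).hasDerivWithinAt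
    · intro x hx hcontact
      have hx0 : 0 < x := lt_of_lt_of_le ha hx.1
      have := hup x (Ico_subset_Icc_self hx)
      rw [← hcontact, lt_div_iff₀ hx0]
      linarith [this]
  exact key ⟨hab, le_refl b⟩

lemma growth_lower {F f : ℝ → ℝ} {c a b : ℝ} (ha : 0 < a) (hab : a ≤ b)
    (Fcont : ContinuousOn F (Icc a b))
    (Fderiv : ∀ x ∈ Ico a b, HasDerivWithinAt F (f x) (Ici x) x)
    (hlo : ∀ s ∈ Icc a b, c * F s < s * f s) :
    F a * (b / a) ^ c ≤ F b := by
  have key : ∀ ⦃x⦄, x ∈ Icc a b → F a * (x / a) ^ c ≤ F x := by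
    refine image_le_of_deriv_right_lt_deriv_boundary'
      (f := fun x => F a * (x / a) ^ c)
      (f' := fun x => c * (F a * (x / a) ^ c) / x)
      (B := F) (B' := f) ?_ ?_ ?_ Fcont Fderiv ?_
    · refine continuousOn_const.mul (ContinuousOn.rpow_const (continuousOn_id.div_const a) ?_)
      intro x hx; left
      have := lt_of_lt_of_le ha hx.1
      positivity
    · intro x hx
      have hx0 : 0 < x := lt_of_lt_of_le ha hx.1
      have h1 : HasDerivAt (fun x : ℝ => F a * (x / a) ^ c)
          (F a * (c * (x / a) ^ (c - 1) * (1 / a))) x := by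
        have := (Real.hasDerivAt_rpow_const (x := x / a) (p := c)
          (Or.inl (by positivity))).comp x ((hasDerivAt_id x).div_const a)
        simpa using this.const_mul (F a)
      have heq : F a * (c * (x / a) ^ (c - 1) * (1 / a))
          = c * (F a * (x / a) ^ c) / x := by
        rw [Real.rpow_sub_one (by positivity)]
        field_simp
      exact (heq ▸ h1).hasDerivWithinAt
    · simp [div_self ha.ne', Real.one_rpow]
    · intro x hx hcontact
      have hx0 : 0 < x := lt_of_lt_of_le ha hx.1
      have := hlo x (Ico_subset_Icc_self hx)
      rw [hcontact, div_lt_iff₀ hx0]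
      linarith [this]
  exact key ⟨hab, le_refl b⟩

lemma regvar_aux {F f : ℝ → ℝ} {γ : ℝ}
    (Fpos : ∀ x : ℝ, 0 < x → 0 < F x)
    (Fcont : ∀ a b : ℝ, 0 < a → ContinuousOn F (Icc a b))
    (Fderiv : ∀ x : ℝ, 0 < x → HasDerivWithinAt F (f x) (Ici x) x)
    (hlim : Tendsto (fun x => x * f x / F x) (𝓝[>](0:ℝ)) (𝓝 γ)) :
    RegVarAt0 F γ := by
  intro t ht
  rw [Metric.tendsto_nhdsWithin_nhds]
  intro ε' hε'
  have hrw : ∀ e : ℝ, t ^ e = Real.exp (Real.log t * e) := fun e =>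
    Real.rpow_def_of_pos ht e
  have hcont1 : Tendsto (fun e : ℝ => t ^ (γ + e)) (𝓝 0) (𝓝 (t ^ γ)) := by
    simp only [hrw]
    have : Continuous fun e : ℝ => Real.exp (Real.log t * (γ + e)) := by continuity
    simpa using this.tendsto 0
  have hcont2 : Tendsto (fun e : ℝ => t ^ (γ - e)) (𝓝 0) (𝓝 (t ^ γ)) := by
    simp only [hrw]
    have : Continuous fun e : ℝ => Real.exp (Real.log t * (γ - e)) := by continuity
    simpa using this.tendsto 0
  have hev : ∀ᶠ e in 𝓝 (0:ℝ), |t ^ (γ + e) - t ^ γ| < ε' ∧ |t ^ (γ - e) - t ^ γ| < ε' := by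
    have h1 := (Metric.tendsto_nhds.mp hcont1) ε' hε'
    have h2 := (Metric.tendsto_nhds.mp hcont2) ε' hε'
    filter_upwards [h1, h2] with e he1 he2
    rw [Real.dist_eq] at he1 he2
    exact ⟨he1, he2⟩
  obtain ⟨r, hr, hball⟩ := Metric.eventually_nhds_iff.mp hev
  set ε := r / 2 with hεdef
  have hε : 0 < ε := by positivity
  obtain ⟨hb1, hb2⟩ := hball (y := ε) (by
    rw [Real.dist_eq, sub_zero, abs_of_pos hε]; exact half_lt_self hr)
  rw [abs_sub_lt_iff] at hb1 hb2
  obtain ⟨δ, hδ, hδp⟩ := Metric.tendsto_nhdsWithin_nhds.mp hlim ε hε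
  have hstrip : ∀ s : ℝ, 0 < s → s < δ →
      (γ - ε) * F s < s * f s ∧ s * f s < (γ + ε) * F s := by
    intro s hs hsδ
    have h := hδp (mem_Ioi.mpr hs) (by rw [Real.dist_eq, sub_zero, abs_of_pos hs]; exact hsδ)
    rw [Real.dist_eq, abs_sub_lt_iff] at h
    have hFs := Fpos s hs
    have h1 : s * f s / F s < γ + ε := by linarith [h.1]
    have h2 : γ - ε < s * f s / F s := by linarith [h.2]
    rw [div_lt_iff₀ hFs] at h1
    rw [lt_div_iff₀ hFs] at h2
    exact ⟨by linarith, by linarith⟩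
  refine ⟨min δ (δ / t), by positivity, ?_⟩
  intro x hx hxd
  have hx0 : 0 < x := hx
  rw [Real.dist_eq, sub_zero, abs_of_pos hx0] at hxd
  have hxδ : x < δ := lt_of_lt_of_le hxd (min_le_left _ _)
  have htxδ : t * x < δ := by
    have : x < δ / t := lt_of_lt_of_le hxd (min_le_right _ _)
    rwa [lt_div_iff₀' ht] at this
  have htx0 : 0 < t * x := by positivity
  have hFx := Fpos x hx0
  have hFtx := Fpos (t * x) htx0
  rcases le_or_gt 1 t with h1t | h1t
  · -- t ≥ 1 : interval [x, t*x]
    have hab : x ≤ t * x := le_mul_of_one_le_left hx0.le h1t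
    have hder : ∀ y ∈ Ico x (t * x), HasDerivWithinAt F (f y) (Ici y) y :=
      fun y hy => Fderiv y (lt_of_lt_of_le hx0 hy.1)
    have hup := growth_upper (c := γ + ε) hx0 hab (Fcont x (t * x) hx0) hder
      (fun s hs => (hstrip s (lt_of_lt_of_le hx0 hs.1) (lt_of_le_of_lt hs.2 htxδ)).2)
    have hlo := growth_lower (c := γ - ε) hx0 hab (Fcont x (t * x) hx0) hder
      (fun s hs => (hstrip s (lt_of_lt_of_le hx0 hs.1) (lt_of_le_of_lt hs.2 htxδ)).1)
    rw [mul_div_cancel_right₀ t hx0.ne'] at hup hlo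
    have hub : F (t * x) / F x ≤ t ^ (γ + ε) := by
      rw [div_le_iff₀ hFx]; linarith [hup]
    have hlb : t ^ (γ - ε) ≤ F (t * x) / F x := by
      rw [le_div_iff₀ hFx]; linarith [hlo]
    rw [Real.dist_eq, abs_sub_lt_iff]
    exact ⟨by linarith [hb1.1], by linarith [hb2.2]⟩
  · -- t < 1 : interval [t*x, x]
    have hab : t * x ≤ x := mul_le_of_le_one_left hx0.le h1t.le
    have hder : ∀ y ∈ Ico (t * x) x, HasDerivWithinAt F (f y) (Ici y) y :=
      fun y hy => Fderiv y (lt_of_lt_of_le htx0 hy.1)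
    have hq : x / (t * x) = t⁻¹ := by
      rw [mul_comm, div_mul_eq_div_div, div_self hx0.ne', one_div]
    have hup := growth_upper (c := γ + ε) htx0 hab (Fcont (t * x) x htx0) hder
      (fun s hs => (hstrip s (lt_of_lt_of_le htx0 hs.1) (lt_of_le_of_lt hs.2 hxδ)).2)
    have hlo := growth_lower (c := γ - ε) htx0 hab (Fcont (t * x) x htx0) hder
      (fun s hs => (hstrip s (lt_of_lt_of_le htx0 hs.1) (lt_of_le_of_lt hs.2 hxδ)).1)
    rw [hq, Real.inv_rpow ht.le] at hup hlo
    have hp1 : (0:ℝ) < t ^ (γ + ε) := Real.rpow_pos_of_pos ht _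
    have hp2 : (0:ℝ) < t ^ (γ - ε) := Real.rpow_pos_of_pos ht _
    have hup' : F x * t ^ (γ + ε) ≤ F (t * x) := by
      have := mul_le_mul_of_nonneg_right hup hp1.le
      rwa [mul_assoc, inv_mul_cancel₀ hp1.ne', mul_one] at this
    have hlo' : F (t * x) ≤ F x * t ^ (γ - ε) := by
      have := mul_le_mul_of_nonneg_right hlo hp2.le
      rwa [mul_assoc, inv_mul_cancel₀ hp2.ne', mul_one] at this
    have hub : F (t * x) / F x ≤ t ^ (γ - ε) := by
      rw [div_le_iff₀ hFx]; linarith [hlo']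
    have hlb : t ^ (γ + ε) ≤ F (t * x) / F x := by
      rw [le_div_iff₀ hFx]; linarith [hup']
    rw [Real.dist_eq, abs_sub_lt_iff]
    exact ⟨by linarith [hb2.1], by linarith [hb1.2]⟩


variable {μ : Measure ℝ} [IsFiniteMeasure μ]

lemma integrableOn_inv_Ioi {c : ℝ} (hc : 0 < c) :
    IntegrableOn (fun y : ℝ => y⁻¹) (Ioi c) μ := by
  refine Integrable.mono' (integrable_const c⁻¹) measurable_inv.aestronglyMeasurable ?_
  filter_upwards [ae_restrict_mem measurableSet_Ioi] with y hy
  have hy0 : 0 < y := lt_trans hc hy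
  rw [Real.norm_eq_abs, abs_of_pos (inv_pos.mpr hy0)]
  exact inv_anti₀ hc (le_of_lt hy)

lemma auxh_nonneg {x : ℝ} (hx : 0 < x) : 0 ≤ ∫ y in Ioi x, y⁻¹ ∂μ := by
  refine setIntegral_nonneg measurableSet_Ioi fun y hy => ?_
  exact inv_nonneg.mpr (le_of_lt (lt_trans hx hy))

-- right continuity of the tail integral
lemma auxh_right_cont {x : ℝ} (hx : 0 < x) :
    ContinuousWithinAt (fun u => ∫ y in Ioi u, y⁻¹ ∂μ) (Ici x) x := by
  have : ∀ u : ℝ, ∫ y in Ioi u, y⁻¹ ∂μ = ∫ y, (Ioi u).indicator (fun y : ℝ => y⁻¹) y ∂μ :=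
    fun u => (integral_indicator measurableSet_Ioi).symm
  simp only [ContinuousWithinAt, this]
  refine tendsto_integral_filter_of_dominated_convergence (fun _ => x⁻¹) ?_ ?_ ?_ ?_
  · filter_upwards [self_mem_nhdsWithin] with u _
    exact (measurable_inv.indicator measurableSet_Ioi).aestronglyMeasurable
  · filter_upwards [self_mem_nhdsWithin] with u hu
    refine ae_of_all _ fun y => ?_
    by_cases hy : y ∈ Ioi u
    · rw [indicator_of_mem hy, Real.norm_eq_abs]
      have hxy : x < y := lt_of_le_of_lt hu hy
      have hy0 : 0 < y := lt_trans hx hxy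
      rw [abs_of_pos (inv_pos.mpr hy0)]
      exact inv_anti₀ hx hxy.le
    · rw [indicator_of_notMem hy]
      simp [inv_nonneg.mpr hx.le]
  · exact integrable_const _
  · refine ae_of_all _ fun y => ?_
    by_cases hy : y ∈ Ioi x
    · have : ∀ᶠ u in 𝓝[Ici x] x, (Ioi u).indicator (fun y : ℝ => y⁻¹) y
          = (Ioi x).indicator (fun y : ℝ => y⁻¹) y := by
        have hyx : x < y := hy
        have : Iio y ∈ 𝓝[Ici x] x := mem_nhdsWithin_of_mem_nhds (Iio_mem_nhds hyx)
        filter_upwards [this] with u hu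
        rw [indicator_of_mem (mem_Ioi.mpr hu), indicator_of_mem hy]
      exact Tendsto.congr' (this.mono fun u h => h.symm) tendsto_const_nhds
    · have : ∀ᶠ u in 𝓝[Ici x] x, (Ioi u).indicator (fun y : ℝ => y⁻¹) y
          = (Ioi x).indicator (fun y : ℝ => y⁻¹) y := by
        filter_upwards [self_mem_nhdsWithin] with u hu
        rw [indicator_of_notMem hy, indicator_of_notMem]
        intro hyu
        exact hy (show x < y from lt_of_le_of_lt hu hyu)
      exact Tendsto.congr' (this.mono fun u h => h.symm) tendsto_const_nhds

lemma auxh_le {x : ℝ} (hx : 0 < x) :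
    ∫ y in Ioi x, y⁻¹ ∂μ ≤ x⁻¹ * (μ univ).toReal := by
  have h1 : ∫ y in Ioi x, y⁻¹ ∂μ ≤ ∫ _ in Ioi x, x⁻¹ ∂μ := by
    refine integral_mono_ae (integrableOn_inv_Ioi hx) (integrable_const _) ?_
    filter_upwards [ae_restrict_mem measurableSet_Ioi] with y hy
    exact inv_anti₀ hx (le_of_lt hy)
  refine le_trans h1 ?_
  rw [setIntegral_const, smul_eq_mul, mul_comm]
  have : (μ (Ioi x)).toReal ≤ (μ univ).toReal :=
    ENNReal.toReal_mono (measure_ne_top μ _) (measure_mono (subset_univ _))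
  exact mul_le_mul_of_nonneg_left this (inv_nonneg.mpr hx.le)

section gfun
variable {g : ℝ → ℝ} (hg : ∀ u : ℝ, 0 < u → g u = ∫ y in Ioi u, y⁻¹ ∂μ)

include hg

lemma g_aesm {a b : ℝ} (ha : 0 < a) :
    AEStronglyMeasurable g (volume.restrict (Icc a b)) := by
  set K : ℝ → ℝ := fun u => ∫ y in Ioi (max u a), y⁻¹ ∂μ with hK
  have hanti : Antitone K := by
    intro u v huv
    refine setIntegral_mono_set (integrableOn_inv_Ioi (μ := μ) (lt_of_lt_of_le ha (le_max_right u a))) ?_ ?_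
    · filter_upwards [ae_restrict_mem measurableSet_Ioi] with y hy
      exact inv_nonneg.mpr (le_of_lt (lt_of_lt_of_le (lt_of_lt_of_le ha (le_max_right u a)) hy.le))
    · exact HasSubset.Subset.eventuallyLE (Ioi_subset_Ioi (max_le_max huv le_rfl))
  refine (hanti.measurable.aestronglyMeasurable).congr ?_
  filter_upwards [ae_restrict_mem measurableSet_Icc] with u hu
  rw [hK]
  simp only
  rw [max_eq_left hu.1, ← hg u (lt_of_lt_of_le ha hu.1)]

lemma g_integrableOn {a b : ℝ} (ha : 0 < a) :
    IntegrableOn g (Icc a b) volume := by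
  refine Integrable.mono' (integrable_const (a⁻¹ * (μ univ).toReal)) (g_aesm hg ha) ?_
  filter_upwards [ae_restrict_mem measurableSet_Icc] with u hu
  have hu0 : 0 < u := lt_of_lt_of_le ha hu.1
  rw [hg u hu0, Real.norm_eq_abs, abs_of_nonneg (auxh_nonneg hu0)]
  refine le_trans (auxh_le hu0) ?_
  exact mul_le_mul_of_nonneg_right (inv_anti₀ ha hu.1) ENNReal.toReal_nonneg

lemma g_intervalIntegrable {a b : ℝ} (ha : 0 < a) (hab : a ≤ b) :
    IntervalIntegrable g volume a b :=
  (intervalIntegrable_iff_integrableOn_Icc_of_le hab).mpr (g_integrableOn hg ha)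

end gfun

noncomputable def auxG (μ : Measure ℝ) (x : ℝ) : ℝ≥0∞ :=
  ∫⁻ y, ENNReal.ofReal (min (x / y) 1) ∂μ

lemma auxG_formula (hμpos : ∀ᵐ y ∂μ, 0 < y) {x : ℝ} (hx : 0 < x) :
    auxG μ x = μ (Iic x) + ENNReal.ofReal (x * ∫ y in Ioi x, y⁻¹ ∂μ) := by
  rw [auxG, ← lintegral_add_compl (fun y => ENNReal.ofReal (min (x / y) 1)) measurableSet_Iic,
    compl_Iic]
  congr 1
  · have h1 : ∫⁻ y in Iic x, ENNReal.ofReal (min (x / y) 1) ∂μ = ∫⁻ _ in Iic x, 1 ∂μ := by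
      refine lintegral_congr_ae ?_
      filter_upwards [ae_restrict_mem measurableSet_Iic, ae_restrict_of_ae hμpos] with y hy hy0
      rw [min_eq_right (by rw [le_div_iff₀ hy0]; linarith [hy.out]), ENNReal.ofReal_one]
    rw [h1, setLIntegral_one]
  · have h1 : ∫⁻ y in Ioi x, ENNReal.ofReal (min (x / y) 1) ∂μ
        = ∫⁻ y in Ioi x, ENNReal.ofReal x * ENNReal.ofReal y⁻¹ ∂μ := by
      refine lintegral_congr_ae ?_
      filter_upwards [ae_restrict_mem measurableSet_Ioi] with y hy
      have hy0 : 0 < y := lt_trans hx hy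
      rw [min_eq_left (by rw [div_le_one hy0]; exact hy.out.le), div_eq_mul_inv,
        ENNReal.ofReal_mul hx.le]
    rw [h1, lintegral_const_mul (r := ENNReal.ofReal x)
        (f := fun y => ENNReal.ofReal y⁻¹) (ENNReal.measurable_ofReal.comp measurable_inv),
      ← ofReal_integral_eq_lintegral_ofReal (integrableOn_inv_Ioi hx)
        (by filter_upwards [ae_restrict_mem measurableSet_Ioi] with y hy;
            exact inv_nonneg.mpr (le_of_lt (lt_trans hx hy))),
      ← ENNReal.ofReal_mul hx.le]

lemma auxG_pos [IsProbabilityMeasure μ] (hμpos : ∀ᵐ y ∂μ, 0 < y) {x : ℝ} (hx : 0 < x) :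
    0 < auxG μ x := by
  rw [pos_iff_ne_zero]
  intro h0
  have hmeas : AEMeasurable (fun y : ℝ => ENNReal.ofReal (min (x / y) 1)) μ :=
    (ENNReal.measurable_ofReal.comp ((measurable_const.div measurable_id).min
      measurable_const)).aemeasurable
  rw [auxG, lintegral_eq_zero_iff' hmeas] at h0
  have hne : (ae μ).NeBot := ae_neBot.mpr (IsProbabilityMeasure.ne_zero μ)
  obtain ⟨y, hy0, hy1⟩ := (hμpos.and h0).exists
  simp only [Pi.zero_apply, ENNReal.ofReal_eq_zero] at hy1
  have : 0 < min (x / y) 1 := lt_min (div_pos hx hy0) one_pos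
  linarith

lemma auxG_le_one [IsProbabilityMeasure μ] (x : ℝ) : auxG μ x ≤ 1 := by
  calc auxG μ x ≤ ∫⁻ _, 1 ∂μ := lintegral_mono fun y => by
        simp [ENNReal.ofReal_le_one, min_le_right]
    _ = 1 := by simp

lemma auxG_ne_top [IsProbabilityMeasure μ] (x : ℝ) : auxG μ x ≠ ⊤ :=
  fun h => by simpa [h] using auxG_le_one (μ := μ) x

lemma auxG_add (hμpos : ∀ᵐ y ∂μ, 0 < y) {a b : ℝ} (ha : 0 < a) (hab : a ≤ b) :
    auxG μ b = auxG μ a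
      + ENNReal.ofReal (∫ t in a..b, (∫ y in Ioi t, y⁻¹ ∂μ) ∂volume) := by
  set k : ℝ → ℝ≥0∞ := fun y => ENNReal.ofReal y⁻¹ with hk
  set h : ℝ → ℝ := fun t => ∫ y in Ioi t, y⁻¹ ∂μ with hh
  -- step A : interval integral as a double lintegral
  have hInt : IntegrableOn h (Ioc a b) volume :=
    (g_integrableOn (fun u _ => rfl) ha).mono_set Ioc_subset_Icc_self
  have stepA : ENNReal.ofReal (∫ t in a..b, h t ∂volume)
      = ∫⁻ t in Ioc a b, ∫⁻ y in Ioi t, k y ∂μ ∂volume := by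
    rw [intervalIntegral.integral_of_le hab,
      ofReal_integral_eq_lintegral_ofReal hInt
        (by filter_upwards [ae_restrict_mem measurableSet_Ioc] with t ht
            exact auxh_nonneg (lt_trans ha ht.1))]
    refine lintegral_congr_ae ?_
    filter_upwards [ae_restrict_mem measurableSet_Ioc] with t ht
    have ht0 : 0 < t := lt_trans ha ht.1
    rw [hh]
    exact ofReal_integral_eq_lintegral_ofReal (integrableOn_inv_Ioi ht0)
      (by filter_upwards [ae_restrict_mem measurableSet_Ioi] with y hy
          exact inv_nonneg.mpr (le_of_lt (lt_trans ht0 hy)))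
  -- step B : swap
  have hmeas2 : Measurable fun p : ℝ × ℝ => (Ioi p.1).indicator k p.2 := by
    have : (fun p : ℝ × ℝ => (Ioi p.1).indicator k p.2)
        = {q : ℝ × ℝ | q.1 < q.2}.indicator (fun q => k q.2) := by
      funext p
      by_cases hp : p.1 < p.2
      · rw [indicator_of_mem (mem_Ioi.mpr hp), indicator_of_mem (by exact hp)]
      · rw [indicator_of_notMem (by simpa using hp), indicator_of_notMem (by exact hp)]
    rw [this]
    exact ((ENNReal.measurable_ofReal.comp measurable_inv).comp measurable_snd).indicator
      (measurableSet_lt measurable_fst measurable_snd)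
  have stepB : ∫⁻ t in Ioc a b, ∫⁻ y in Ioi t, k y ∂μ ∂volume
      = ∫⁻ y, ∫⁻ t in Ioc a b, (Ioi t).indicator k y ∂volume ∂μ := by
    have h1 : ∀ t : ℝ, ∫⁻ y in Ioi t, k y ∂μ = ∫⁻ y, (Ioi t).indicator k y ∂μ :=
      fun t => (lintegral_indicator measurableSet_Ioi _).symm
    simp_rw [h1]
    exact lintegral_lintegral_swap hmeas2.aemeasurable
  -- step C : inner computation
  have stepC : ∀ y : ℝ, 0 < y →
      ENNReal.ofReal (min (a / y) 1) + ∫⁻ t in Ioc a b, (Ioi t).indicator k y ∂volume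
        = ENNReal.ofReal (min (b / y) 1) := by
    intro y hy0
    have hrw : ∀ t : ℝ, (Ioi t).indicator k y = (Iio y).indicator (fun _ => k y) t := by
      intro t
      by_cases hty : t < y
      · rw [indicator_of_mem (mem_Ioi.mpr hty), indicator_of_mem (mem_Iio.mpr hty)]
      · rw [indicator_of_notMem (by simpa using hty),
          indicator_of_notMem (by simpa using hty)]
    simp_rw [hrw]
    rw [lintegral_indicator measurableSet_Iio, setLIntegral_const,
      Measure.restrict_apply measurableSet_Iio]
    rcases le_or_gt y a with hya | hay
    · have h1 : Iio y ∩ Ioc a b = ∅ := by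
        ext t; simp only [mem_inter_iff, mem_Iio, mem_Ioc, mem_empty_iff_false, iff_false]
        rintro ⟨h1, h2, _⟩; linarith
      rw [h1]
      simp only [measure_empty, mul_zero, add_zero]
      rw [min_eq_right (by rw [le_div_iff₀ hy0]; linarith),
        min_eq_right (by rw [le_div_iff₀ hy0]; nlinarith)]
    · rcases le_or_gt y b with hyb | hby
      · have h1 : Iio y ∩ Ioc a b = Ioo a y := by
          ext t; simp only [mem_inter_iff, mem_Iio, mem_Ioc, mem_Ioo]
          constructor
          · rintro ⟨h1, h2, h3⟩; exact ⟨h2, h1⟩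
          · rintro ⟨h1, h2⟩; exact ⟨h2, h1, by linarith⟩
        rw [h1, Real.volume_Ioo, hk, ← ENNReal.ofReal_mul (inv_nonneg.mpr hy0.le),
          ← ENNReal.ofReal_add (by positivity)
            (mul_nonneg (inv_nonneg.mpr hy0.le) (by linarith))]
        rw [min_eq_left (by rw [div_le_one hy0]; exact hay.le),
          min_eq_right (by rw [le_div_iff₀ hy0]; nlinarith)]
        congr 1
        field_simp
        ring
      · have h1 : Iio y ∩ Ioc a b = Ioc a b := by
          rw [inter_eq_right]
          exact fun t ht => lt_of_le_of_lt ht.2 hby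
        rw [h1, Real.volume_Ioc, hk, ← ENNReal.ofReal_mul (inv_nonneg.mpr hy0.le),
          ← ENNReal.ofReal_add (by positivity)
            (mul_nonneg (inv_nonneg.mpr hy0.le) (by linarith))]
        rw [min_eq_left (by rw [div_le_one hy0]; exact hay.le),
          min_eq_left (by rw [div_le_one hy0]; exact hby.le)]
        congr 1
        field_simp
        ring
  -- assemble
  have hadd := lintegral_add_left (μ := μ)
    (f := fun y => ENNReal.ofReal (min (a / y) 1))
    (ENNReal.measurable_ofReal.comp ((measurable_const.div measurable_id).min
      measurable_const))
    (fun y => ∫⁻ t in Ioc a b, (Ioi t).indicator k y ∂volume)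
  rw [stepA, stepB, auxG, auxG, ← hadd]
  refine lintegral_congr_ae ?_
  filter_upwards [hμpos] with y hy0
  exact (stepC y hy0).symm

lemma g_aesm_Ici {g : ℝ → ℝ} (hg : ∀ u : ℝ, 0 < u → g u = ∫ y in Ioi u, y⁻¹ ∂μ)
    {a : ℝ} (ha : 0 < a) :
    AEStronglyMeasurable g (volume.restrict (Ici a)) := by
  set K : ℝ → ℝ := fun u => ∫ y in Ioi (max u a), y⁻¹ ∂μ with hK
  have hanti : Antitone K := by
    intro u v huv
    refine setIntegral_mono_set
      (integrableOn_inv_Ioi (μ := μ) (lt_of_lt_of_le ha (le_max_right u a))) ?_ ?_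
    · filter_upwards [ae_restrict_mem measurableSet_Ioi] with y hy
      exact inv_nonneg.mpr
        (le_of_lt (lt_of_lt_of_le (lt_of_lt_of_le ha (le_max_right u a)) hy.le))
    · exact HasSubset.Subset.eventuallyLE (Ioi_subset_Ioi (max_le_max huv le_rfl))
  refine (hanti.measurable.aestronglyMeasurable).congr ?_
  filter_upwards [ae_restrict_mem measurableSet_Ici] with u hu
  rw [hK]
  simp only
  rw [max_eq_left hu.out, ← hg u (lt_of_lt_of_le ha hu.out)]

open ProbabilityTheory in
lemma product_law {Ω : Type*} [MeasurableSpace Ω] (P : Measure Ω) [IsProbabilityMeasure P]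
    {R S : Ω → ℝ} (hR : Measurable R) (hS : Measurable S)
    (hRpos : ∀ᵐ ω ∂P, 0 < R ω)
    (hind : IndepFun R S P)
    (hSlaw : Measure.map S P = volume.restrict (Set.Ioo (0 : ℝ) 1))
    {x : ℝ} (hx : 0 < x) :
    P {ω | R ω * S ω ≤ x} = auxG (Measure.map R P) x := by
  have hset : MeasurableSet {p : ℝ × ℝ | p.1 * p.2 ≤ x} :=
    (measurable_fst.mul measurable_snd) measurableSet_Iic
  have hjoint := (indepFun_iff_map_prod_eq_prod_map_map hR.aemeasurable
    hS.aemeasurable).mp hind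
  have h1 : {ω | R ω * S ω ≤ x} = (fun ω => (R ω, S ω)) ⁻¹' {p : ℝ × ℝ | p.1 * p.2 ≤ x} :=
    rfl
  rw [h1, ← Measure.map_apply (hR.prodMk hS) hset, hjoint, hSlaw,
    Measure.prod_apply hset]
  have hμpos : ∀ᵐ r ∂(Measure.map R P), 0 < r := by
    have : ∀ᵐ r ∂(Measure.map R P), r ∈ Ioi (0:ℝ) :=
      (ae_map_iff hR.aemeasurable measurableSet_Ioi).mpr hRpos
    exact this
  refine lintegral_congr_ae ?_
  filter_upwards [hμpos] with r hr0
  have hpre : Prod.mk r ⁻¹' {p : ℝ × ℝ | p.1 * p.2 ≤ x} = Iic (x / r) := by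
    ext s
    simp only [mem_preimage, mem_setOf_eq, mem_Iic]
    rw [le_div_iff₀ hr0, mul_comm]
  rw [hpre, Measure.restrict_apply measurableSet_Iic]
  rcases le_or_gt 1 (x / r) with hxr | hxr
  · have h2 : Iic (x / r) ∩ Ioo (0:ℝ) 1 = Ioo (0:ℝ) 1 := by
      rw [inter_eq_right]
      exact fun s hs => le_trans hs.2.le hxr
    rw [h2, Real.volume_Ioo, min_eq_right hxr]
    norm_num
  · have h2 : Iic (x / r) ∩ Ioo (0:ℝ) 1 = Ioc (0:ℝ) (x / r) := by
      ext s
      simp only [mem_inter_iff, mem_Iic, mem_Ioo, mem_Ioc]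
      constructor
      · rintro ⟨h1, h2, h3⟩; exact ⟨h2, h1⟩
      · rintro ⟨h1, h2⟩; exact ⟨h2, h1, lt_of_le_of_lt h2 hxr⟩
    rw [h2, Real.volume_Ioc, min_eq_left hxr.le]
    norm_num

end auxiliary

theorem uniform_product_converse_regular_variation
    {Ω : Type*} [MeasurableSpace Ω] (P : Measure Ω) [IsProbabilityMeasure P]
    (γ : ℝ) (hγ : γ ∈ Set.Ico (0 : ℝ) 1)
    (R S : Ω → ℝ) (hR : Measurable R) (hS : Measurable S)
    (hRpos : ∀ᵐ ω ∂P, 0 < R ω)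
    (hind : IndepFun R S P)
    -- `S` is uniformly distributed on `(0,1)`
    (hSlaw : Measure.map S P = volume.restrict (Set.Ioo (0 : ℝ) 1))
    -- `H` is the df of `R`, `H11` that of `W = R·S`, and `h11` the density of `W`
    (H H11 h11 : ℝ → ℝ)
    (hH : ∀ x, H x = (P {ω | R ω ≤ x}).toReal)
    (hH11 : ∀ x, H11 x = (P {ω | R ω * S ω ≤ x}).toReal)
    (hh11 : ∀ x : ℝ, 0 < x → h11 x = ∫ y in Set.Ioi x, y⁻¹ ∂(Measure.map R P))
    (hlim : Filter.Tendsto (fun x => x * h11 x / H11 x)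
      (nhdsWithin 0 (Set.Ioi 0)) (nhds γ)) :
    RegVarAt0 H11 γ
    ∧ Filter.Tendsto (fun x => H x / H11 x) (nhdsWithin 0 (Set.Ioi 0)) (nhds (1 - γ))
    ∧ RegVarAt0 H γ := by
  set μ := Measure.map R P with hμdef
  haveI : IsProbabilityMeasure μ := Measure.isProbabilityMeasure_map hR.aemeasurable
  have hμpos : ∀ᵐ y ∂μ, 0 < y := by
    have : ∀ᵐ r ∂μ, r ∈ Ioi (0:ℝ) :=
      (ae_map_iff hR.aemeasurable measurableSet_Ioi).mpr hRpos
    exact this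
  have hGH11 : ∀ x : ℝ, 0 < x → H11 x = (auxG μ x).toReal := fun x hx => by
    rw [hH11, product_law P hR hS hRpos hind hSlaw hx]
  have hHx : ∀ x : ℝ, H x = (μ (Iic x)).toReal := fun x => by
    rw [hH, hμdef, Measure.map_apply hR measurableSet_Iic]
    rfl
  have hid : ∀ x : ℝ, 0 < x → H11 x = H x + x * h11 x := by
    intro x hx
    rw [hGH11 x hx, auxG_formula hμpos hx,
      ENNReal.toReal_add (measure_ne_top μ _) ENNReal.ofReal_ne_top,
      ENNReal.toReal_ofReal (mul_nonneg hx.le (auxh_nonneg hx)), hHx, hh11 x hx]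
  have hH11pos : ∀ x : ℝ, 0 < x → 0 < H11 x := fun x hx => by
    rw [hGH11 x hx]
    exact ENNReal.toReal_pos (auxG_pos hμpos hx).ne' (auxG_ne_top x)
  have hFTC : ∀ a b : ℝ, 0 < a → a ≤ b → H11 b = H11 a + ∫ t in a..b, h11 t := by
    intro a b ha hab
    have h1 := auxG_add (μ := μ) hμpos ha hab
    have hnn : 0 ≤ ∫ t in a..b, (∫ y in Ioi t, y⁻¹ ∂μ) ∂volume :=
      intervalIntegral.integral_nonneg hab fun t ht => auxh_nonneg (lt_of_lt_of_le ha ht.1)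
    have h2 : ∫ t in a..b, (∫ y in Ioi t, y⁻¹ ∂μ) ∂volume = ∫ t in a..b, h11 t := by
      refine intervalIntegral.integral_congr ?_
      intro t ht
      rw [Set.uIcc_of_le hab] at ht
      exact (hh11 t (lt_of_lt_of_le ha ht.1)).symm
    rw [hGH11 b (lt_of_lt_of_le ha hab), hGH11 a ha, h1,
      ENNReal.toReal_add (auxG_ne_top _) ENNReal.ofReal_ne_top,
      ENNReal.toReal_ofReal hnn, h2]
  have hcont : ∀ a b : ℝ, 0 < a → ContinuousOn H11 (Icc a b) := by
    intro a b ha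
    rcases le_or_gt a b with hab | hba
    · have hInt : IntegrableOn h11 (Icc a b) volume :=
        g_integrableOn (μ := μ) (fun u hu => hh11 u hu) ha
      have hprim := intervalIntegral.continuousOn_primitive (μ := volume) (f := h11) (a := a) (b := b) hInt
      refine ContinuousOn.congr ((continuousOn_const (c := H11 a)).add hprim) ?_
      intro x hx
      rw [hFTC a x ha hx.1, intervalIntegral.integral_of_le hx.1]
      rfl
    · rw [Icc_eq_empty (not_le.mpr hba)]
      exact continuousOn_empty _
  have hderiv : ∀ x : ℝ, 0 < x → HasDerivWithinAt H11 (h11 x) (Ici x) x := by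
    intro x hx
    have ha : 0 < x / 2 := half_pos hx
    have hax : x / 2 < x := half_lt_self hx
    have hint : IntervalIntegrable h11 volume (x / 2) x :=
      g_intervalIntegrable (μ := μ) (fun u hu => hh11 u hu) ha hax.le
    have hmeasAt : StronglyMeasurableAtFilter h11 (𝓝[>] x) volume :=
      ⟨Ici x, mem_of_superset self_mem_nhdsWithin Ioi_subset_Ici_self,
        g_aesm_Ici (μ := μ) (fun u hu => hh11 u hu) hx⟩
    have hcw : ContinuousWithinAt h11 (Ioi x) x :=
      ((auxh_right_cont (μ := μ) hx).congr
        (fun y hy => hh11 y (lt_of_lt_of_le hx hy))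
        (hh11 x hx)).mono Ioi_subset_Ici_self
    have hprim : HasDerivWithinAt (fun u => ∫ t in (x / 2)..u, h11 t) (h11 x) (Ici x) x :=
      intervalIntegral.integral_hasDerivWithinAt_right hint hmeasAt hcw
    refine (hprim.const_add (H11 (x / 2))).congr ?_ ?_
    · intro y hy
      exact hFTC (x / 2) y ha (le_of_lt (lt_of_lt_of_le hax hy))
    · exact hFTC (x / 2) x ha hax.le
  have part1 : RegVarAt0 H11 γ := regvar_aux hH11pos hcont hderiv hlim
  have h1γ : (1 : ℝ) - γ ≠ 0 := by
    have := hγ.2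
    intro h
    linarith
  have h1γpos : (0 : ℝ) < 1 - γ := by linarith [hγ.2]
  have part2 : Tendsto (fun x => H x / H11 x) (𝓝[>](0:ℝ)) (𝓝 (1 - γ)) := by
    have hev : ∀ᶠ x in 𝓝[>](0:ℝ), (1 : ℝ) - x * h11 x / H11 x = H x / H11 x := by
      filter_upwards [self_mem_nhdsWithin] with x hx
      have hx0 : 0 < x := hx
      have hpos := hH11pos x hx0
      have hxH : H x = H11 x - x * h11 x := by linarith [hid x hx0]
      rw [hxH, sub_div, div_self hpos.ne']
    exact (tendsto_const_nhds.sub hlim).congr' hev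
  refine ⟨part1, part2, ?_⟩
  intro t ht
  have hmul : Tendsto (fun x : ℝ => t * x) (𝓝[>](0:ℝ)) (𝓝[>](0:ℝ)) := by
    refine tendsto_nhdsWithin_of_tendsto_nhds_of_eventually_within _ ?_ ?_
    · have h : Tendsto (fun x : ℝ => t * x) (𝓝 0) (𝓝 0) := by
        have h0 : Continuous fun x : ℝ => t * x := continuous_const.mul continuous_id
        simpa using h0.tendsto (0 : ℝ)
      exact h.mono_left nhdsWithin_le_nhds
    · filter_upwards [self_mem_nhdsWithin] with x hx
      exact mul_pos ht hx
  have hA : Tendsto (fun x => H (t * x) / H11 (t * x)) (𝓝[>](0:ℝ)) (𝓝 (1 - γ)) :=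
    part2.comp hmul
  have hB := part1 t ht
  have hC : Tendsto (fun x => H11 x / H x) (𝓝[>](0:ℝ)) (𝓝 (1 - γ)⁻¹) := by
    have := part2.inv₀ h1γ
    simp only [inv_div] at this
    exact this
  have hevH : ∀ᶠ x in 𝓝[>](0:ℝ), 0 < H x := by
    filter_upwards [part2.eventually (eventually_gt_nhds h1γpos), self_mem_nhdsWithin]
      with x hx1 hx2
    have hpos := hH11pos x hx2
    have := mul_pos hx1 hpos
    rwa [div_mul_cancel₀ _ hpos.ne'] at this
  have hev : ∀ᶠ x in 𝓝[>](0:ℝ),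
      H (t * x) / H11 (t * x) * (H11 (t * x) / H11 x) * (H11 x / H x)
        = H (t * x) / H x := by
    filter_upwards [hevH, self_mem_nhdsWithin] with x hHx0 hx
    have hx0 : 0 < x := hx
    have htx0 : 0 < t * x := mul_pos ht hx0
    have h1 := hH11pos x hx0
    have h2 := hH11pos (t * x) htx0
    field_simp
  have hfin := ((hA.mul hB).mul hC).congr' hev
  have hval : (1 - γ) * t ^ γ * (1 - γ)⁻¹ = t ^ γ := by
    rw [mul_comm ((1:ℝ) - γ) (t ^ γ), mul_assoc, mul_inv_cancel₀ h1γ, mul_one]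
  rwa [hval] at hfin
end

section
/- Let (Xₙ)ₙ be i.i.d. positive random variables whose common distribution function Q is regularly varying at 0 with index γ > 0, and choose constants aₙ > 0 with n·Q(1/aₙ) → 1. Then aₙ·min(X₁,…,Xₙ) converges in distribution as n → ∞ to the Weibull-type law 𝒢_γ(x) = 1 − exp(−x^γ), x > 0. -/
open MeasureTheory ProbabilityTheory Real Filter Topology Set
open scoped ENNReal

/-- If `qₙ → 0` with `qₙ > 0` and `(n+1)·qₙ → c`, then `(1-qₙ)^(n+1) → exp (-c)`. -/
lemma pow_one_sub_tendsto_exp (q : ℕ → ℝ) (c : ℝ) (hqpos : ∀ n, 0 < q n)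
    (hq0 : Filter.Tendsto q Filter.atTop (nhds 0))
    (hc : Filter.Tendsto (fun n : ℕ => ((n : ℝ) + 1) * q n) Filter.atTop (nhds c)) :
    Filter.Tendsto (fun n => (1 - q n) ^ (n + 1)) Filter.atTop (nhds (Real.exp (-c))) := by
  -- slope of log at 1
  have hslope : Filter.Tendsto (slope Real.log 1) (nhdsWithin 1 {(1 : ℝ)}ᶜ) (nhds 1) := by
    have := (Real.hasDerivAt_log one_ne_zero)
    rw [hasDerivAt_iff_tendsto_slope] at this
    simpa using this
  -- `1 - qₙ → 1` within `≠ 1`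
  have h1q : Filter.Tendsto (fun n => 1 - q n) Filter.atTop (nhdsWithin 1 {(1 : ℝ)}ᶜ) := by
    rw [tendsto_nhdsWithin_iff]
    constructor
    · exact (tendsto_const_nhds : Filter.Tendsto (fun _ : ℕ => (1:ℝ)) Filter.atTop _).sub hq0 |>.congr (fun n => rfl) |>.mono_right (by simp [nhdsWithin_le_nhds]) |>.congr (fun n => rfl)
    · exact Filter.Eventually.of_forall fun n => by
        simp only [mem_compl_iff, mem_singleton_iff]
        nlinarith [hqpos n]
  have hratio : Filter.Tendsto (fun n => Real.log (1 - q n) / (-(q n)))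
      Filter.atTop (nhds 1) := by
    have := hslope.comp h1q
    refine this.congr fun n => ?_
    simp [slope, Real.log_one]
    ring_nf
  -- `(n+1)·log(1-qₙ) → -c`
  have hlog : Filter.Tendsto (fun n : ℕ => ((n : ℝ) + 1) * Real.log (1 - q n))
      Filter.atTop (nhds (-c)) := by
    have := hc.mul hratio
    rw [mul_one] at this
    have h2 := this.neg
    refine h2.congr fun n => ?_
    have hne : q n ≠ 0 := (hqpos n).ne'
    field_simp
  have hexp := (Real.continuous_exp.tendsto _).comp hlog
  have hev : ∀ᶠ n : ℕ in Filter.atTop, Real.exp (((n : ℝ) + 1) * Real.log (1 - q n))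
      = (1 - q n) ^ (n + 1) := by
    have : ∀ᶠ n in Filter.atTop, q n < 1 := hq0.eventually_lt_const one_pos
    filter_upwards [this] with n hn
    have h1 : 0 < 1 - q n := by linarith
    have : ((n : ℝ) + 1) = ((n + 1 : ℕ) : ℝ) := by push_cast; ring
    rw [this, Real.exp_nat_mul, Real.exp_log h1]
  exact (hexp.congr' hev)

theorem minima_weibull_limit
    {Ω : Type*} [MeasurableSpace Ω] (P : Measure Ω) [IsProbabilityMeasure P]
    (γ : ℝ) (hγ : 0 < γ)
    (X : ℕ → Ω → ℝ) (hmeas : ∀ n, Measurable (X n))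
    -- the `Xₙ` are i.i.d. and positive
    (hindep : iIndepFun X P)
    (hident : ∀ n, Measure.map (X n) P = Measure.map (X 0) P)
    (hpos : ∀ n, ∀ᵐ ω ∂P, 0 < X n ω)
    -- `Q` is the common distribution function, regularly varying at 0 with index `γ`
    (Q : ℝ → ℝ) (hQ : ∀ x, Q x = (P {ω | X 0 ω ≤ x}).toReal)
    (hQrv : RegVarAt0 Q γ)
    (a : ℕ → ℝ) (ha : ∀ n, 0 < a n)
    (han : Filter.Tendsto (fun n : ℕ => (n : ℝ) * Q (1 / a n)) Filter.atTop (nhds 1)) :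
    ∀ x : ℝ, 0 < x →
      Filter.Tendsto
        (fun n => (P {ω | a (n + 1) *
          (Finset.range (n + 1)).inf' Finset.nonempty_range_add_one (fun i => X i ω)
            ≤ x}).toReal)
        Filter.atTop (nhds (1 - Real.exp (-(x ^ γ)))) := by
  intro x hx
  -- basic properties of Q
  have hQnonneg : ∀ u, 0 ≤ Q u := fun u => by rw [hQ]; exact ENNReal.toReal_nonneg
  have hQle1 : ∀ u, Q u ≤ 1 := by
    intro u
    rw [hQ]
    have h1 := (prob_le_one (μ := P) (s := {ω | X 0 ω ≤ u}))
    calc (P {ω | X 0 ω ≤ u}).toReal ≤ (1 : ℝ≥0∞).toReal :=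
          ENNReal.toReal_mono (by simp) h1
      _ = 1 := by simp
  have hQmono : ∀ u v : ℝ, u ≤ v → Q u ≤ Q v := by
    intro u v huv
    rw [hQ, hQ]
    exact ENNReal.toReal_mono (measure_ne_top _ _)
      (measure_mono fun ω hω => le_trans hω huv)
  -- Q is positive on positives
  have hQpos : ∀ u : ℝ, 0 < u → 0 < Q u := by
    have h1 := hQrv 1 one_pos
    simp only [one_mul, Real.one_rpow] at h1
    have h2 : ∀ᶠ y in nhdsWithin 0 (Set.Ioi 0), (1 : ℝ) / 2 < Q y / Q y :=
      h1.eventually_const_lt (by norm_num)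
    rw [eventually_nhdsWithin_iff, Metric.eventually_nhds_iff] at h2
    obtain ⟨δ, hδ, hδ'⟩ := h2
    intro u hu
    set v : ℝ := min u (δ / 2) with hv
    have hv0 : 0 < v := lt_min hu (by linarith)
    have hvδ : dist v 0 < δ := by
      rw [Real.dist_eq, sub_zero, abs_of_pos hv0]
      calc v ≤ δ / 2 := min_le_right _ _
        _ < δ := by linarith
    have := hδ' hvδ hv0
    have hQv : Q v ≠ 0 := by
      intro h
      rw [h] at this
      norm_num at this
    have : 0 < Q v := lt_of_le_of_ne (hQnonneg v) (Ne.symm hQv)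
    exact lt_of_lt_of_le this (hQmono v u (min_le_left _ _))
  -- Q (1/aₙ) → 0
  have hQa0 : Filter.Tendsto (fun n => Q (1 / a n)) Filter.atTop (nhds 0) := by
    have := han.mul tendsto_one_div_atTop_nhds_zero_nat
    rw [one_mul] at this
    refine this.congr' ?_
    filter_upwards [Filter.eventually_ge_atTop 1] with n hn
    have hn' : (n : ℝ) ≠ 0 := Nat.cast_ne_zero.mpr (by omega)
    field_simp
  -- 1/aₙ → 0 within positives
  have hinvA : Filter.Tendsto (fun n => 1 / a n) Filter.atTop
      (nhdsWithin 0 (Set.Ioi 0)) := by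
    rw [tendsto_nhdsWithin_iff]
    constructor
    · rw [tendsto_order]
      constructor
      · intro b hb
        exact Filter.Eventually.of_forall fun n =>
          lt_of_lt_of_le hb (le_of_lt (one_div_pos.mpr (ha n)))
      · intro b hb
        have hQb := hQpos b hb
        filter_upwards [hQa0.eventually_lt_const hQb] with n hn
        by_contra hcon
        push_neg at hcon
        exact absurd (hQmono b (1 / a n) hcon) (not_le.mpr hn)
    · exact Filter.Eventually.of_forall fun n => Set.mem_Ioi.mpr (one_div_pos.mpr (ha n))
  have hshift : Filter.Tendsto (fun n : ℕ => n + 1) Filter.atTop Filter.atTop :=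
    tendsto_add_atTop_nat 1
  -- (n+1)·Q(x/a(n+1)) → x^γ
  have hc : Filter.Tendsto (fun n : ℕ => ((n : ℝ) + 1) * Q (x / a (n + 1)))
      Filter.atTop (nhds (x ^ γ)) := by
    have h1 := (hQrv x hx).comp (hinvA.comp hshift)
    have h2 := han.comp hshift
    have h3 := h1.mul h2
    rw [mul_one] at h3
    refine h3.congr fun n => ?_
    have hQne : Q (1 / a (n + 1)) ≠ 0 :=
      (hQpos _ (one_div_pos.mpr (ha (n + 1)))).ne'
    simp only [Function.comp]
    rw [mul_one_div x (a (n + 1))]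
    push_cast
    field_simp
  set q : ℕ → ℝ := fun n => Q (x / a (n + 1)) with hqdef
  have hqpos : ∀ n, 0 < q n := fun n => hQpos _ (div_pos hx (ha (n + 1)))
  have hq0 : Filter.Tendsto q Filter.atTop (nhds 0) := by
    have := hc.mul tendsto_one_div_add_atTop_nhds_zero_nat
    rw [mul_zero] at this
    refine this.congr fun n => ?_
    have : ((n : ℝ) + 1) ≠ 0 := by positivity
    field_simp
    rfl
  -- the limit of (1-qₙ)^(n+1)
  have hlim := pow_one_sub_tendsto_exp q (x ^ γ) hqpos hq0 hc
  -- the exact probability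
  have hkey : ∀ n : ℕ, (P {ω | a (n + 1) *
      (Finset.range (n + 1)).inf' Finset.nonempty_range_add_one (fun i => X i ω) ≤ x}).toReal
      = 1 - (1 - q n) ^ (n + 1) := by
    intro n
    set t : ℝ := x / a (n + 1) with ht
    have hSeq : {ω | a (n + 1) *
        (Finset.range (n + 1)).inf' Finset.nonempty_range_add_one (fun i => X i ω) ≤ x}
        = (⋂ i ∈ Finset.range (n + 1), X i ⁻¹' Set.Ioi t)ᶜ := by
      ext ω
      simp only [mem_setOf_eq, mem_compl_iff, mem_iInter, mem_preimage, mem_Ioi,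
        not_forall, not_lt]
      constructor
      · intro h
        by_contra hcon
        push_neg at hcon
        have : t < (Finset.range (n + 1)).inf' Finset.nonempty_range_add_one
            (fun i => X i ω) := by
          rw [Finset.lt_inf'_iff]
          exact fun i hi => hcon i hi
        have := (div_lt_iff₀' (ha (n + 1))).mp this
        rw [mul_comm] at this
        linarith
      · rintro ⟨i, hi, hit⟩
        have hinf : (Finset.range (n + 1)).inf' Finset.nonempty_range_add_one
            (fun i => X i ω) ≤ X i ω := Finset.inf'_le _ hi
        have h2 : (Finset.range (n + 1)).inf' Finset.nonempty_range_add_one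
            (fun i => X i ω) ≤ t := le_trans hinf hit
        calc a (n + 1) * (Finset.range (n + 1)).inf' Finset.nonempty_range_add_one
              (fun i => X i ω) ≤ a (n + 1) * t :=
              mul_le_mul_of_nonneg_left h2 (le_of_lt (ha (n + 1)))
          _ = x := by rw [ht, mul_comm, div_mul_cancel₀ x (ha (n + 1)).ne']
    have hmeasInt : MeasurableSet (⋂ i ∈ Finset.range (n + 1), X i ⁻¹' Set.Ioi t) :=
      MeasurableSet.biInter (Finset.range (n + 1)).countable_toSet
        fun i _ => (hmeas i) measurableSet_Ioi
    have hprod : P (⋂ i ∈ Finset.range (n + 1), X i ⁻¹' Set.Ioi t)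
        = ∏ i ∈ Finset.range (n + 1), P (X i ⁻¹' Set.Ioi t) :=
      hindep.meas_biInter fun i _ => ⟨Set.Ioi t, measurableSet_Ioi, rfl⟩
    have hsame : ∀ i : ℕ, P (X i ⁻¹' Set.Ioi t) = P (X 0 ⁻¹' Set.Ioi t) := by
      intro i
      rw [← Measure.map_apply (hmeas i) measurableSet_Ioi, hident i,
        Measure.map_apply (hmeas 0) measurableSet_Ioi]
    have hprod2 : P (⋂ i ∈ Finset.range (n + 1), X i ⁻¹' Set.Ioi t)
        = (P (X 0 ⁻¹' Set.Ioi t)) ^ (n + 1) := by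
      rw [hprod]
      rw [Finset.prod_congr rfl fun i _ => hsame i]
      simp [Finset.prod_const]
    -- P(X₀ > t) in terms of Q
    have hIoi : P (X 0 ⁻¹' Set.Ioi t) = 1 - P {ω | X 0 ω ≤ t} := by
      have h1 : X 0 ⁻¹' Set.Ioi t = (X 0 ⁻¹' Set.Iic t)ᶜ := by
        ext ω; simp [not_le]
      have h2 : X 0 ⁻¹' Set.Iic t = {ω | X 0 ω ≤ t} := rfl
      rw [h1, prob_compl_eq_one_sub ((hmeas 0) measurableSet_Iic), h2]
    have hIoiReal : (P (X 0 ⁻¹' Set.Ioi t)).toReal = 1 - q n := by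
      rw [hIoi, ENNReal.toReal_sub_of_le prob_le_one ENNReal.one_ne_top]
      simp [hqdef, hQ, ht]
    rw [hSeq, prob_compl_eq_one_sub hmeasInt, hprod2]
    rw [ENNReal.toReal_sub_of_le (pow_le_one₀ zero_le prob_le_one) ENNReal.one_ne_top]
    rw [ENNReal.toReal_pow, hIoiReal]
    simp
  have hfinal := (tendsto_const_nhds : Filter.Tendsto (fun _ : ℕ => (1:ℝ)) Filter.atTop (nhds 1)).sub hlim
  refine hfinal.congr fun n => ?_
  rw [hkey n]
end
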